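/- Superadditivity of the n-block upper bound sequence: define nC̄_n as the maximum of (1/2) log det((I+B_n) K_{w,n} (I+B_n)^T + K_{s,n}) - (1/2) log det K_{w,n} over positive semidefinite K_{s,n} and strictly lower triangular B_n subject to tr(K_{s,n} + B_n(K_{w,n}+K_{v,n})B_n^T) ≤ nP, where K_{w,n}, K_{v,n} are the n×n covariance matrices of stationary Gaussian processes {W_i} and {V_i}. Then the sequence (n C̄_n) is superadditive: (m+n) C̄_{m+n} ≥ m C̄_m + n C̄_n, and hence lim_{n→∞} C̄_n exists and equals sup_n C̄_n (assuming the bounds are finite). -/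

import Mathlib

open Matrix Filter

/-- A matrix is strictly lower triangular if all entries on or above the diagonal vanish. -/
def StrictLowerTri {n : ℕ} (B : Matrix (Fin n) (Fin n) ℝ) : Prop :=
  ∀ i j : Fin n, i ≤ j → B i j = 0

/-- The n×n covariance matrix of a stationary process with autocovariance `r`. -/
def toepCov (r : ℕ → ℝ) (n : ℕ) : Matrix (Fin n) (Fin n) ℝ :=
  Matrix.of fun i j : Fin n => r ((i : ℤ) - (j : ℤ)).natAbs

/-- The set of objective values of the n-block upper-bound optimization; `n * C̄_n` is
its supremum. -/
def objVals (rw rv : ℕ → ℝ) (P : ℝ) (n : ℕ) : Set ℝ :=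
  {y | ∃ Ks B : Matrix (Fin n) (Fin n) ℝ, Ks.PosSemidef ∧ StrictLowerTri B ∧
    (Ks + B * (toepCov rw n + toepCov rv n) * Bᵀ).trace ≤ n * P ∧
    y = (1 / 2) * Real.log (((1 + B) * toepCov rw n * (1 + B)ᵀ + Ks).det)
        - (1 / 2) * Real.log ((toepCov rw n).det)}

namespace NBlockAux

variable {ι : Type*} [Fintype ι] [DecidableEq ι]

open scoped MatrixOrder in
lemma posSemidef_iff_eq_transpose_mul_self {E : Matrix ι ι ℝ} :
    E.PosSemidef ↔ ∃ C : Matrix ι ι ℝ, E = Cᴴ * C := by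
  refine ⟨fun hE => ?_, fun ⟨C, hC⟩ => hC ▸ posSemidef_conjTranspose_mul_self C⟩
  obtain ⟨B, hB⟩ := CStarAlgebra.nonneg_iff_eq_star_mul_self.mp hE.nonneg
  exact ⟨B, hB⟩

lemma one_le_det_one_add {M : Matrix ι ι ℝ} (hM : M.PosSemidef) : 1 ≤ (1 + M).det := by
  have h := hM.1.spectral_theorem
  simp only [Unitary.conjStarAlgAut_apply] at h
  set U := (hM.1.eigenvectorUnitary : Matrix ι ι ℝ)
  have hU : U * star U = 1 := (Matrix.mem_unitaryGroup_iff).mp hM.1.eigenvectorUnitary.2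
  have h1 : (1 + M) = U * (1 + diagonal (RCLike.ofReal ∘ hM.1.eigenvalues)) * star U := by
    rw [Matrix.mul_add, Matrix.add_mul, Matrix.mul_one, hU, ← h]
  have hU' : star U * U = 1 := (Matrix.mem_unitaryGroup_iff').mp hM.1.eigenvectorUnitary.2
  rw [h1, det_mul, det_mul, mul_comm, ← mul_assoc, ← det_mul, hU', det_one, one_mul]
  rw [show (1 : Matrix ι ι ℝ) = diagonal (fun _ => (1:ℝ)) from (diagonal_one).symm,
    diagonal_add, det_diagonal]
  refine le_trans (le_of_eq (by simp : (1:ℝ) = ∏ _i : ι, (1:ℝ)))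
    (Finset.prod_le_prod (fun i _ => zero_le_one) (fun i _ => ?_))
  have := hM.eigenvalues_nonneg i
  simp only [Pi.add_apply, Function.comp_apply]
  norm_num
  linarith

lemma det_le_det_add {P E : Matrix ι ι ℝ} (hP : P.PosDef) (hE : E.PosSemidef) :
    P.det ≤ (P + E).det := by
  obtain ⟨C, rfl⟩ := posSemidef_iff_eq_transpose_mul_self.mp hE
  have h1 : P + Cᴴ * C = P * (1 + P⁻¹ * (Cᴴ * C)) := by
    rw [Matrix.mul_add, Matrix.mul_one, ← Matrix.mul_assoc,
      Matrix.mul_nonsing_inv _ hP.det_pos.ne'.isUnit, Matrix.one_mul]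
  rw [h1, det_mul, ← Matrix.mul_assoc,
    det_one_add_mul_comm (P⁻¹ * Cᴴ) C, ← Matrix.mul_assoc]
  have h2 : (1:ℝ) ≤ (1 + C * P⁻¹ * Cᴴ).det :=
    one_le_det_one_add (hP.inv.posSemidef.mul_mul_conjTranspose_same C)
  nlinarith [hP.det_pos]

lemma det_mono {P Q : Matrix ι ι ℝ} (hP : P.PosDef) (h : (Q - P).PosSemidef) :
    P.det ≤ Q.det := by
  have := det_le_det_add hP h
  rwa [add_sub_cancel] at this

lemma inv_sub_inv_posSemidef {P E : Matrix ι ι ℝ} (hP : P.PosDef) (hE : E.PosSemidef) :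
    (P⁻¹ - (P + E)⁻¹).PosSemidef := by
  obtain ⟨C, rfl⟩ := posSemidef_iff_eq_transpose_mul_self.mp hE
  have hPu : IsUnit P.det := hP.det_pos.ne'.isUnit
  have hWpd : (1 + C * P⁻¹ * Cᴴ).PosDef :=
    Matrix.PosDef.add_posSemidef Matrix.PosDef.one
      (hP.inv.posSemidef.mul_mul_conjTranspose_same C)
  set W := 1 + C * P⁻¹ * Cᴴ with hWdef
  have hWu : IsUnit W.det := hWpd.det_pos.ne'.isUnit
  have key : (P + Cᴴ * C) * (P⁻¹ - P⁻¹ * Cᴴ * W⁻¹ * (C * P⁻¹)) = 1 := by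
    have e1 : P * P⁻¹ = 1 := Matrix.mul_nonsing_inv _ hPu
    have e2 : W * W⁻¹ = 1 := Matrix.mul_nonsing_inv _ hWu
    have expand : (P + Cᴴ * C) * (P⁻¹ - P⁻¹ * Cᴴ * W⁻¹ * (C * P⁻¹)) =
        P * P⁻¹ - (P * P⁻¹) * (Cᴴ * (W⁻¹ * (C * P⁻¹)))
          + Cᴴ * (C * P⁻¹) - Cᴴ * ((C * P⁻¹ * Cᴴ) * (W⁻¹ * (C * P⁻¹))) := by
      simp only [Matrix.add_mul, Matrix.mul_sub, Matrix.mul_assoc]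
      abel
    rw [expand, e1, Matrix.one_mul]
    have e3 : Cᴴ * (C * P⁻¹) - Cᴴ * ((C * P⁻¹ * Cᴴ) * (W⁻¹ * (C * P⁻¹)))
        - Cᴴ * (W⁻¹ * (C * P⁻¹)) = Cᴴ * ((1 - W * W⁻¹) * (C * P⁻¹)) := by
      rw [hWdef]
      simp only [Matrix.add_mul, Matrix.sub_mul, Matrix.mul_sub, Matrix.mul_add,
        Matrix.one_mul, Matrix.mul_assoc]
      abel
    rw [e2, sub_self, Matrix.zero_mul, Matrix.mul_zero] at e3
    have := sub_eq_zero.mp e3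
    rw [show (1:Matrix ι ι ℝ) - Cᴴ * (W⁻¹ * (C * P⁻¹)) + Cᴴ * (C * P⁻¹)
        - Cᴴ * (C * P⁻¹ * Cᴴ * (W⁻¹ * (C * P⁻¹))) =
        1 + (Cᴴ * (C * P⁻¹) - Cᴴ * (C * P⁻¹ * Cᴴ * (W⁻¹ * (C * P⁻¹)))
          - Cᴴ * (W⁻¹ * (C * P⁻¹))) from by abel, ← Matrix.mul_assoc] at *
    rw [this]
    abel
  have hinv : (P + Cᴴ * C)⁻¹ = P⁻¹ - P⁻¹ * Cᴴ * W⁻¹ * (C * P⁻¹) :=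
    Matrix.inv_eq_right_inv key
  rw [hinv, sub_sub_cancel]
  have hform : P⁻¹ * Cᴴ * W⁻¹ * (C * P⁻¹) = (P⁻¹ * Cᴴ) * W⁻¹ * (P⁻¹ * Cᴴ)ᴴ := by
    rw [conjTranspose_mul, conjTranspose_conjTranspose, hP.inv.isHermitian.eq]
  rw [hform]
  exact (hWpd.inv.posSemidef).mul_mul_conjTranspose_same _

lemma det_add_eq {P : Matrix ι ι ℝ} (hP : P.PosDef) (C : Matrix ι ι ℝ) :
    (P + Cᴴ * C).det = P.det * (1 + C * P⁻¹ * Cᴴ).det := by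
  have h1 : P + Cᴴ * C = P * (1 + P⁻¹ * (Cᴴ * C)) := by
    rw [Matrix.mul_add, Matrix.mul_one, ← Matrix.mul_assoc,
      Matrix.mul_nonsing_inv _ hP.det_pos.ne'.isUnit, Matrix.one_mul]
  rw [h1, det_mul, ← Matrix.mul_assoc, det_one_add_mul_comm (P⁻¹ * Cᴴ) C,
    ← Matrix.mul_assoc]

lemma det_ratio {P Q E : Matrix ι ι ℝ} (hP : P.PosDef) (hQ : Q.PosDef)
    (hPQ : (Q - P).PosSemidef) (hE : E.PosSemidef) :
    P.det * (Q + E).det ≤ (P + E).det * Q.det := by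
  obtain ⟨C, rfl⟩ := posSemidef_iff_eq_transpose_mul_self.mp hE
  rw [det_add_eq hP C, det_add_eq hQ C]
  have hinv : (P⁻¹ - Q⁻¹).PosSemidef := by
    have := inv_sub_inv_posSemidef hP hPQ
    rwa [add_sub_cancel] at this
  have hdiff : ((1 + C * P⁻¹ * Cᴴ) - (1 + C * Q⁻¹ * Cᴴ)).PosSemidef := by
    have : (1 + C * P⁻¹ * Cᴴ) - (1 + C * Q⁻¹ * Cᴴ) = C * (P⁻¹ - Q⁻¹) * Cᴴ := by
      rw [Matrix.mul_sub, Matrix.sub_mul]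
      abel
    rw [this]
    exact hinv.mul_mul_conjTranspose_same C
  have h1 : (1 + C * Q⁻¹ * Cᴴ).PosDef :=
    Matrix.PosDef.add_posSemidef Matrix.PosDef.one
      (hQ.inv.posSemidef.mul_mul_conjTranspose_same C)
  have h2 : (1 + C * Q⁻¹ * Cᴴ).det ≤ (1 + C * P⁻¹ * Cᴴ).det := det_mono h1 hdiff
  have hp := hP.det_pos
  have hq := hQ.det_pos
  calc P.det * (Q.det * (1 + C * Q⁻¹ * Cᴴ).det)
      = (P.det * Q.det) * (1 + C * Q⁻¹ * Cᴴ).det := by ring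
    _ ≤ (P.det * Q.det) * (1 + C * P⁻¹ * Cᴴ).det := by
        apply mul_le_mul_of_nonneg_left h2; positivity
    _ = P.det * (1 + C * P⁻¹ * Cᴴ).det * Q.det := by ring

lemma posDef_of_posSemidef_det_pos {S : Matrix ι ι ℝ} (hS : S.PosSemidef)
    (hdet : 0 < S.det) : S.PosDef := by
  obtain ⟨C, rfl⟩ := posSemidef_iff_eq_transpose_mul_self.mp hS
  have hCu : IsUnit C := by
    rw [Matrix.isUnit_iff_isUnit_det]
    rw [det_mul, det_conjTranspose, star_trivial] at hdet
    exact (by nlinarith : C.det ≠ 0).isUnit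
  refine .of_dotProduct_mulVec_pos hS.1 fun x hx => ?_
  have hCx : C *ᵥ x ≠ 0 := by
    intro h0
    exact hx ((Matrix.mulVec_injective_iff_isUnit.mpr hCu) (by simpa using h0))
  rw [← mulVec_mulVec, dotProduct_mulVec, vecMul_conjTranspose, star_star]
  exact Matrix.dotProduct_star_self_pos_iff.mpr hCx

lemma posDef_conj_of_isUnit {M B : Matrix ι ι ℝ} (hM : M.PosDef) (hB : IsUnit B) :
    (Bᴴ * M * B).PosDef := by
  refine .of_dotProduct_mulVec_pos (isHermitian_conjTranspose_mul_mul B hM.1) fun x hx => ?_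
  have hBx : B *ᵥ x ≠ 0 := by
    intro h0
    exact hx ((Matrix.mulVec_injective_iff_isUnit.mpr hB) (by simpa using h0))
  have := hM.dotProduct_mulVec_pos hBx
  simpa only [star_mulVec, dotProduct_mulVec, vecMul_vecMul] using this

lemma posDef_conj {M U : Matrix ι ι ℝ} (hM : M.PosDef) (hU : IsUnit U.det) :
    (U * M * Uᵀ).PosDef := by
  have h1 : IsUnit (Uᴴ) := by
    rw [Matrix.isUnit_iff_isUnit_det, det_conjTranspose, star_trivial]
    exact hU
  have := posDef_conj_of_isUnit hM h1
  rw [conjTranspose_conjTranspose] at this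
  rwa [← Matrix.conjTranspose_eq_transpose_of_trivial]

lemma posDef_submatrix_equiv {κ : Type*} [Fintype κ] [DecidableEq κ]
    {M : Matrix ι ι ℝ} (hM : M.PosDef) (e : κ ≃ ι) :
    (M.submatrix e e).PosDef := by
  refine .of_dotProduct_mulVec_pos ((isHermitian_submatrix_equiv e).mpr hM.1) fun x hx => ?_
  have hx' : x ∘ e.symm ≠ 0 := by
    intro h0
    apply hx
    funext i
    have := congrFun h0 (e i)
    simpa using this
  have := hM.dotProduct_mulVec_pos hx'
  rw [Matrix.submatrix_mulVec_equiv]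
  convert this using 1
  rw [dotProduct, dotProduct]
  exact Fintype.sum_equiv e _ _ (fun i => by simp)

lemma trace_submatrix_equiv {κ : Type*} [Fintype κ]
    (M : Matrix ι ι ℝ) (e : κ ≃ ι) : (M.submatrix e e).trace = M.trace := by
  rw [Matrix.trace, Matrix.trace, ← Equiv.sum_comp e (fun j => M.diag j)]
  rfl

lemma trace_fromBlocks {κ : Type*} [Fintype κ] (A : Matrix ι ι ℝ) (B : Matrix ι κ ℝ)
    (C : Matrix κ ι ℝ) (D : Matrix κ κ ℝ) :
    (fromBlocks A B C D).trace = A.trace + D.trace := by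
  rw [Matrix.trace, Fintype.sum_sum_type]
  rfl

lemma posSemidef_fromBlocks_diag {κ : Type*} [Fintype κ] [DecidableEq κ]
    {A : Matrix ι ι ℝ} {D : Matrix κ κ ℝ} (hA : A.PosSemidef) (hD : D.PosSemidef) :
    (fromBlocks A 0 0 D).PosSemidef := by
  refine .of_dotProduct_mulVec_nonneg ?_ ?_
  · simp only [Matrix.IsHermitian, fromBlocks_conjTranspose, conjTranspose_zero,
      hA.1.eq, hD.1.eq]
  · intro x
    have := hA.dotProduct_mulVec_nonneg (x ∘ Sum.inl)
    have := hD.dotProduct_mulVec_nonneg (x ∘ Sum.inr)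
    rw [← Sum.elim_comp_inl_inr x, fromBlocks_mulVec]
    simp only [Matrix.zero_mulVec, add_zero, zero_add, Function.star_sumElim]
    rw [sumElim_dotProduct_sumElim]
    positivity

lemma posDef_toBlocks₁₁ {κ : Type*} [Fintype κ] [DecidableEq κ]
    {M : Matrix (ι ⊕ κ) (ι ⊕ κ) ℝ} (hM : M.PosDef) : M.toBlocks₁₁.PosDef := by
  refine .of_dotProduct_mulVec_pos ?_ ?_
  · ext i j
    exact hM.1.apply (Sum.inl i) (Sum.inl j)
  · intro x hx
    have hx' : Sum.elim x (0 : κ → ℝ) ≠ 0 := by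
      intro h0
      exact hx (funext fun i => congrFun h0 (Sum.inl i))
    have := hM.dotProduct_mulVec_pos hx'
    rw [← fromBlocks_toBlocks M, fromBlocks_mulVec] at this
    simpa only [Sum.elim_comp_inl, Sum.elim_comp_inr, Matrix.mulVec_zero, add_zero,
      Function.star_sumElim, star_zero, sumElim_dotProduct_sumElim,
      zero_dotProduct] using this

lemma posDef_toBlocks₂₂ {κ : Type*} [Fintype κ] [DecidableEq κ]
    {M : Matrix (ι ⊕ κ) (ι ⊕ κ) ℝ} (hM : M.PosDef) : M.toBlocks₂₂.PosDef := by
  refine .of_dotProduct_mulVec_pos ?_ ?_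
  · ext i j
    exact hM.1.apply (Sum.inr i) (Sum.inr j)
  · intro x hx
    have hx' : Sum.elim (0 : ι → ℝ) x ≠ 0 := by
      intro h0
      exact hx (funext fun i => congrFun h0 (Sum.inr i))
    have := hM.dotProduct_mulVec_pos hx'
    rw [← fromBlocks_toBlocks M, fromBlocks_mulVec] at this
    simpa only [Sum.elim_comp_inl, Sum.elim_comp_inr, Matrix.mulVec_zero, add_zero, zero_add,
      Function.star_sumElim, star_zero, sumElim_dotProduct_sumElim,
      zero_dotProduct] using this

lemma det_one_add_strictLowerTri {k : ℕ} {B : Matrix (Fin k) (Fin k) ℝ}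
    (hB : StrictLowerTri B) : (1 + B).det = 1 := by
  have htri : (1 + B).BlockTriangular OrderDual.toDual := by
    intro i j hij
    have hij' : i < j := hij
    rw [Matrix.add_apply, Matrix.one_apply_ne hij'.ne, hB i j hij'.le, add_zero]
  rw [Matrix.det_of_lowerTriangular _ htri]
  refine Finset.prod_eq_one fun i _ => ?_
  rw [Matrix.add_apply, Matrix.one_apply_eq, hB i i le_rfl, add_zero]

set_option maxHeartbeats 1000000 in
theorem key_ineq {p q : Type*} [Fintype p] [DecidableEq p] [Fintype q] [DecidableEq q]
    {K : Matrix (p ⊕ q) (p ⊕ q) ℝ} (hK : K.PosDef)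
    {U1 : Matrix p p ℝ} {U2 : Matrix q q ℝ} (h1 : U1.det = 1) (h2 : U2.det = 1)
    {D1 : Matrix p p ℝ} {D2 : Matrix q q ℝ} (hD1 : D1.PosSemidef) (hD2 : D2.PosSemidef) :
    (Real.log ((U1 * K.toBlocks₁₁ * U1ᵀ + D1).det) - Real.log ((K.toBlocks₁₁).det))
    + (Real.log ((U2 * K.toBlocks₂₂ * U2ᵀ + D2).det) - Real.log ((K.toBlocks₂₂).det))
    ≤ Real.log (((fromBlocks U1 0 0 U2) * K * (fromBlocks U1 0 0 U2)ᵀ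
        + fromBlocks D1 0 0 D2).det) - Real.log (K.det) := by
  classical
  set V : Matrix (p ⊕ q) (p ⊕ q) ℝ := fromBlocks U1 0 0 U2 with hV
  have hVdet : V.det = 1 := by
    rw [hV, det_fromBlocks_zero₂₁, h1, h2, one_mul]
  have hVu : IsUnit V.det := by rw [hVdet]; exact isUnit_one
  -- A is the congruence of K
  set A : Matrix (p ⊕ q) (p ⊕ q) ℝ := V * K * Vᵀ with hA
  have hApd : A.PosDef := posDef_conj hK hVu
  -- blocks of A
  have hAblocks : A = fromBlocks (U1 * K.toBlocks₁₁ * U1ᵀ) (U1 * K.toBlocks₁₂ * U2ᵀ)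
      (U2 * K.toBlocks₂₁ * U1ᵀ) (U2 * K.toBlocks₂₂ * U2ᵀ) := by
    rw [hA, hV]
    conv_lhs => rw [← fromBlocks_toBlocks K]
    rw [fromBlocks_transpose, fromBlocks_multiply, fromBlocks_multiply]
    simp [Matrix.mul_assoc]
  set A11 := U1 * K.toBlocks₁₁ * U1ᵀ with hA11
  set A22 := U2 * K.toBlocks₂₂ * U2ᵀ with hA22
  set X := U1 * K.toBlocks₁₂ * U2ᵀ with hX
  -- A21 = Xᴴ
  have hherm := hApd.1
  have hA21 : U2 * K.toBlocks₂₁ * U1ᵀ = Xᴴ := by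
    have := hApd.1.eq
    rw [hAblocks] at this
    rw [fromBlocks_conjTranspose] at this
    have h21 := congrArg Matrix.toBlocks₂₁ this
    simp only [Matrix.toBlocks_fromBlocks₂₁] at h21
    exact h21.symm
  have hAblocks' : A = fromBlocks A11 X Xᴴ A22 := by rw [hAblocks, hA21]
  -- positive definiteness of blocks
  have hU1u : IsUnit U1.det := by rw [h1]; exact isUnit_one
  have hU2u : IsUnit U2.det := by rw [h2]; exact isUnit_one
  have hA11pd : A11.PosDef := posDef_conj (posDef_toBlocks₁₁ hK) hU1u
  have hA22pd : A22.PosDef := posDef_conj (posDef_toBlocks₂₂ hK) hU2u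
  have hN11pd : (A11 + D1).PosDef := hA11pd.add_posSemidef hD1
  have hN22pd : (A22 + D2).PosDef := hA22pd.add_posSemidef hD2
  have hApd' : (fromBlocks A11 X Xᴴ A22).PosDef := hAblocks' ▸ hApd
  have hNfact : fromBlocks A11 X Xᴴ A22 + fromBlocks D1 0 0 D2
      = fromBlocks (A11 + D1) X Xᴴ (A22 + D2) := by
    rw [fromBlocks_add]
    simp
  have hNpd : (fromBlocks (A11 + D1) X Xᴴ (A22 + D2)).PosDef := by
    rw [← hNfact]
    exact hApd'.add_posSemidef (posSemidef_fromBlocks_diag hD1 hD2)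
  haveI iA11 : Invertible A11 := Matrix.invertibleOfIsUnitDet _ hA11pd.det_pos.ne'.isUnit
  haveI iN11 : Invertible (A11 + D1) :=
    Matrix.invertibleOfIsUnitDet _ hN11pd.det_pos.ne'.isUnit
  set S := A22 - Xᴴ * A11⁻¹ * X with hS
  set S' := (A22 + D2) - Xᴴ * (A11 + D1)⁻¹ * X with hS'
  have hdetA : (fromBlocks A11 X Xᴴ A22).det = A11.det * S.det := by
    rw [det_fromBlocks₁₁, Matrix.invOf_eq_nonsing_inv]
  have hdetN : (fromBlocks (A11 + D1) X Xᴴ (A22 + D2)).det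
      = (A11 + D1).det * S'.det := by
    rw [det_fromBlocks₁₁, Matrix.invOf_eq_nonsing_inv]
  have hSpsd : S.PosSemidef := (PosDef.fromBlocks₁₁ X A22 hA11pd).mp hApd'.posSemidef
  have hSdetpos : 0 < S.det := by
    have h := hdetA
    have := hApd'.det_pos
    rw [h] at this
    have ha := hA11pd.det_pos
    nlinarith
  have hSpd : S.PosDef := posDef_of_posSemidef_det_pos hSpsd hSdetpos
  have hGpsd : (Xᴴ * (A11⁻¹ - (A11 + D1)⁻¹) * X).PosSemidef := by
    have := (inv_sub_inv_posSemidef hA11pd hD1).mul_mul_conjTranspose_same Xᴴ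
    simpa using this
  have hS'eq : S' = (S + D2) + Xᴴ * (A11⁻¹ - (A11 + D1)⁻¹) * X := by
    rw [hS, hS', Matrix.mul_sub, Matrix.sub_mul]
    abel
  have hdetS' : (S + D2).det ≤ S'.det := by
    rw [hS'eq]
    exact det_le_det_add (hSpd.add_posSemidef hD2) hGpsd
  have hA22subS : (A22 - S).PosSemidef := by
    have : A22 - S = Xᴴ * A11⁻¹ * X := by rw [hS]; abel
    rw [this]
    have := hA11pd.inv.posSemidef.mul_mul_conjTranspose_same Xᴴ
    simpa using this
  have hratio : S.det * (A22 + D2).det ≤ (S + D2).det * A22.det :=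
    det_ratio hSpd hA22pd hA22subS hD2
  -- determinant identifications
  have hK11det : K.toBlocks₁₁.det = A11.det := by
    rw [hA11, det_mul, det_mul, det_transpose, h1, one_mul, mul_one]
  have hK22det : K.toBlocks₂₂.det = A22.det := by
    rw [hA22, det_mul, det_mul, det_transpose, h2, one_mul, mul_one]
  have hKdet : K.det = A.det := by
    rw [hA, det_mul, det_mul, det_transpose, hVdet, one_mul, mul_one]
  rw [hK11det, hK22det, hKdet, hAblocks', hNfact, hdetN, hdetA]
  -- numeric inequality with logarithms
  have a_pos := hA11pd.det_pos
  have b_pos := hA22pd.det_pos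
  have n1_pos := hN11pd.det_pos
  have n2_pos := hN22pd.det_pos
  have s_pos := hSdetpos
  have sd2_pos := (hSpd.add_posSemidef hD2).det_pos
  have s'_pos : 0 < S'.det := lt_of_lt_of_le sd2_pos hdetS'
  have hmul : (A22 + D2).det * S.det ≤ S'.det * A22.det := by
    calc (A22 + D2).det * S.det = S.det * (A22 + D2).det := by ring
      _ ≤ (S + D2).det * A22.det := hratio
      _ ≤ S'.det * A22.det := by nlinarith
  have hlog : Real.log ((A22 + D2).det) + Real.log (S.det)
      ≤ Real.log (S'.det) + Real.log (A22.det) := by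
    rw [← Real.log_mul (by positivity) (by positivity),
      ← Real.log_mul (by positivity) (by positivity)]
    exact Real.log_le_log (by positivity) hmul
  rw [Real.log_mul (by positivity) (by positivity),
    Real.log_mul (by positivity) (by positivity)]
  linarith

lemma toepCov_toBlocks₁₁ (r : ℕ → ℝ) (m n : ℕ) :
    ((toepCov r (m+n)).submatrix finSumFinEquiv finSumFinEquiv).toBlocks₁₁ = toepCov r m := by
  ext i j
  show toepCov r (m+n) (finSumFinEquiv (Sum.inl i)) (finSumFinEquiv (Sum.inl j)) = _
  simp only [toepCov, Matrix.of_apply, finSumFinEquiv_apply_left, Fin.coe_castAdd]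

lemma toepCov_toBlocks₂₂ (r : ℕ → ℝ) (m n : ℕ) :
    ((toepCov r (m+n)).submatrix finSumFinEquiv finSumFinEquiv).toBlocks₂₂ = toepCov r n := by
  ext i j
  show toepCov r (m+n) (finSumFinEquiv (Sum.inr i)) (finSumFinEquiv (Sum.inr j)) = _
  simp only [toepCov, Matrix.of_apply, finSumFinEquiv_apply_right, Fin.coe_natAdd]
  congr 1
  omega

set_option maxHeartbeats 1000000 in
lemma exists_combine (r1 r2 : ℕ → ℝ) (P : ℝ)
    (hw : ∀ k, (toepCov r1 k).PosDef) {m n : ℕ} {y z : ℝ}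
    (hy : y ∈ objVals r1 r2 P m) (hz : z ∈ objVals r1 r2 P n) :
    ∃ w ∈ objVals r1 r2 P (m + n), y + z ≤ w := by
  classical
  obtain ⟨Ks1, B1, hKs1, hB1, htr1, hy⟩ := hy
  obtain ⟨Ks2, B2, hKs2, hB2, htr2, hz⟩ := hz
  set e : Fin m ⊕ Fin n ≃ Fin (m+n) := finSumFinEquiv with he
  set KsC : Matrix (Fin (m+n)) (Fin (m+n)) ℝ :=
    (fromBlocks Ks1 0 0 Ks2).submatrix e.symm e.symm with hKsC
  set BC : Matrix (Fin (m+n)) (Fin (m+n)) ℝ :=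
    (fromBlocks B1 0 0 B2).submatrix e.symm e.symm with hBC
  -- sum-world versions of the Toeplitz matrices
  set Tws : Matrix (Fin m ⊕ Fin n) (Fin m ⊕ Fin n) ℝ :=
    (toepCov r1 (m+n)).submatrix e e with hTws
  set Tvs : Matrix (Fin m ⊕ Fin n) (Fin m ⊕ Fin n) ℝ :=
    (toepCov r2 (m+n)).submatrix e e with hTvs
  have hback : ∀ M : Matrix (Fin (m+n)) (Fin (m+n)) ℝ,
      (M.submatrix e e).submatrix e.symm e.symm = M := by
    intro M
    rw [Matrix.submatrix_submatrix]
    simp [Equiv.self_comp_symm]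
  refine ⟨_, ⟨KsC, BC, ?_, ?_, ?_, rfl⟩, ?_⟩
  · exact (posSemidef_fromBlocks_diag hKs1 hKs2).submatrix _
  · -- strict lower triangularity
    intro i j hij
    rw [hBC, Matrix.submatrix_apply]
    rcases hi : e.symm i with i1 | i1 <;> rcases hj : e.symm j with j1 | j1
    · have hi' : (i : ℕ) = (i1 : ℕ) := by
        have : i = e (Sum.inl i1) := by rw [← hi]; simp
        rw [this, he, finSumFinEquiv_apply_left, Fin.coe_castAdd]
      have hj' : (j : ℕ) = (j1 : ℕ) := by
        have : j = e (Sum.inl j1) := by rw [← hj]; simp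
        rw [this, he, finSumFinEquiv_apply_left, Fin.coe_castAdd]
      have : i1 ≤ j1 := by
        rw [Fin.le_def, ← hi', ← hj']
        exact hij
      simpa using hB1 i1 j1 this
    · simp [Matrix.fromBlocks_apply₁₂]
    · -- impossible : i in second block, j in first block, i ≤ j
      exfalso
      have hi' : (i : ℕ) = m + (i1 : ℕ) := by
        have : i = e (Sum.inr i1) := by rw [← hi]; simp
        rw [this, he, finSumFinEquiv_apply_right, Fin.coe_natAdd]
      have hj' : (j : ℕ) = (j1 : ℕ) := by
        have : j = e (Sum.inl j1) := by rw [← hj]; simp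
        rw [this, he, finSumFinEquiv_apply_left, Fin.coe_castAdd]
      have hij' : (i : ℕ) ≤ (j : ℕ) := hij
      have := j1.isLt
      omega
    · have hi' : (i : ℕ) = m + (i1 : ℕ) := by
        have : i = e (Sum.inr i1) := by rw [← hi]; simp
        rw [this, he, finSumFinEquiv_apply_right, Fin.coe_natAdd]
      have hj' : (j : ℕ) = m + (j1 : ℕ) := by
        have : j = e (Sum.inr j1) := by rw [← hj]; simp
        rw [this, he, finSumFinEquiv_apply_right, Fin.coe_natAdd]
      have : i1 ≤ j1 := by
        rw [Fin.le_def]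
        have hij' : (i : ℕ) ≤ (j : ℕ) := hij
        omega
      simpa using hB2 i1 j1 this
  · -- trace constraint
    have hTT : toepCov r1 (m+n) + toepCov r2 (m+n) = (Tws + Tvs).submatrix e.symm e.symm := by
      ext i j
      simp [hTws, hTvs, Matrix.submatrix_apply, Matrix.add_apply]
    have h11w : Tws.toBlocks₁₁ = toepCov r1 m := by rw [hTws, he]; exact toepCov_toBlocks₁₁ r1 m n
    have h11v : Tvs.toBlocks₁₁ = toepCov r2 m := by rw [hTvs, he]; exact toepCov_toBlocks₁₁ r2 m n
    have h22w : Tws.toBlocks₂₂ = toepCov r1 n := by rw [hTws, he]; exact toepCov_toBlocks₂₂ r1 m n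
    have h22v : Tvs.toBlocks₂₂ = toepCov r2 n := by rw [hTvs, he]; exact toepCov_toBlocks₂₂ r2 m n
    have h11sum : (Tws + Tvs).toBlocks₁₁ = toepCov r1 m + toepCov r2 m := by
      rw [← h11w, ← h11v]; ext i j; rfl
    have h22sum : (Tws + Tvs).toBlocks₂₂ = toepCov r1 n + toepCov r2 n := by
      rw [← h22w, ← h22v]; ext i j; rfl
    have hmat : KsC + BC * (toepCov r1 (m+n) + toepCov r2 (m+n)) * BCᵀ
        = (fromBlocks Ks1 0 0 Ks2).submatrix e.symm e.symm
          + ((fromBlocks B1 0 0 B2) * (Tws + Tvs)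
            * (fromBlocks B1 0 0 B2)ᵀ).submatrix e.symm e.symm := by
      rw [hKsC, hBC, hTT, Matrix.transpose_submatrix,
        Matrix.submatrix_mul_equiv, Matrix.submatrix_mul_equiv]
    rw [hmat, Matrix.trace_add, trace_submatrix_equiv, trace_submatrix_equiv]
    have hsplit : Tws + Tvs = fromBlocks (toepCov r1 m + toepCov r2 m)
        ((Tws + Tvs).toBlocks₁₂) ((Tws + Tvs).toBlocks₂₁) (toepCov r1 n + toepCov r2 n) := by
      rw [← h11sum, ← h22sum]
      exact (fromBlocks_toBlocks _).symm
    rw [hsplit, fromBlocks_transpose, fromBlocks_multiply, fromBlocks_multiply,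
      trace_fromBlocks, trace_fromBlocks]
    simp only [Matrix.zero_mul, Matrix.mul_zero, add_zero, zero_add, transpose_zero]
    have hc : ((m + n : ℕ) : ℝ) * P = (m : ℝ) * P + (n : ℝ) * P := by push_cast; ring
    rw [hc]
    rw [Matrix.trace_add] at htr1 htr2
    linarith
  · -- the objective inequality
    have h11w : Tws.toBlocks₁₁ = toepCov r1 m := by rw [hTws, he]; exact toepCov_toBlocks₁₁ r1 m n
    have h22w : Tws.toBlocks₂₂ = toepCov r1 n := by rw [hTws, he]; exact toepCov_toBlocks₂₂ r1 m n
    have hTw : toepCov r1 (m+n) = Tws.submatrix e.symm e.symm := by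
      ext i j
      simp [hTws, Matrix.submatrix_apply]
    have hVone : (1 : Matrix (Fin m ⊕ Fin n) (Fin m ⊕ Fin n) ℝ) + fromBlocks B1 0 0 B2
        = fromBlocks (1 + B1) 0 0 (1 + B2) := by
      conv_lhs => rw [← Matrix.fromBlocks_one]
      rw [fromBlocks_add]
      simp
    have h1B : 1 + BC = (fromBlocks (1 + B1) 0 0 (1 + B2)).submatrix e.symm e.symm := by
      rw [hBC, ← hVone]
      ext i j
      simp [Matrix.submatrix_apply, Matrix.add_apply, Matrix.one_apply]
    have hj : ∀ X Y : Matrix (Fin m ⊕ Fin n) (Fin m ⊕ Fin n) ℝ,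
        X.submatrix e.symm e.symm + Y.submatrix e.symm e.symm
          = (X + Y).submatrix e.symm e.symm := by
      intro X Y
      ext i j
      simp
    have hMdet : ((1 + BC) * toepCov r1 (m+n) * (1 + BC)ᵀ + KsC).det
        = ((fromBlocks (1 + B1) 0 0 (1 + B2)) * Tws * (fromBlocks (1 + B1) 0 0 (1 + B2))ᵀ
            + fromBlocks Ks1 0 0 Ks2).det := by
      rw [h1B, hTw, hKsC, Matrix.transpose_submatrix, Matrix.submatrix_mul_equiv,
        Matrix.submatrix_mul_equiv, hj, det_submatrix_equiv_self]
    have hTwdet : (toepCov r1 (m+n)).det = Tws.det := by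
      rw [hTw, det_submatrix_equiv_self]
    have key := key_ineq (posDef_submatrix_equiv (hw (m+n)) e)
      (det_one_add_strictLowerTri hB1) (det_one_add_strictLowerTri hB2) hKs1 hKs2
    rw [h11w, h22w] at key
    rw [hy, hz, hMdet, hTwdet]
    linarith

lemma zero_mem (r1 r2 : ℕ → ℝ) {P : ℝ} (hP : 0 ≤ P) (k : ℕ) :
    (0 : ℝ) ∈ objVals r1 r2 P k := by
  refine ⟨0, 0, Matrix.PosSemidef.zero, fun i j _ => rfl, ?_, ?_⟩
  · simp only [Matrix.zero_mul, Matrix.mul_zero, add_zero, zero_add, Matrix.trace_zero]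
    positivity
  · simp

end NBlockAux

/-- For stationary Gaussian noise processes, the sequence `n ↦ n C̄_n` of n-block
upper bounds is superadditive, and hence `C̄_n = (n C̄_n)/n` converges to
`sup_n C̄_n` (assuming the bounds are finite). -/
theorem nblock_bound_superadditive_and_convergent
    (rw rv : ℕ → ℝ) (P : ℝ) (hP : 0 ≤ P)
    (hw : ∀ n, (toepCov rw n).PosDef) (hv : ∀ n, (toepCov rv n).PosDef)
    (hbdd : ∀ n, BddAbove (objVals rw rv P n))
    (hfin : BddAbove (Set.range fun n : ℕ => sSup (objVals rw rv P n) / n)) :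
    (∀ m n : ℕ, sSup (objVals rw rv P m) + sSup (objVals rw rv P n)
        ≤ sSup (objVals rw rv P (m + n))) ∧
    Tendsto (fun n : ℕ => sSup (objVals rw rv P n) / n) atTop
      (nhds (⨆ n : ℕ, sSup (objVals rw rv P n) / n)) := by
  classical
  set u : ℕ → ℝ := fun k => sSup (objVals rw rv P k) with hu
  have hzero : ∀ k, (0 : ℝ) ∈ objVals rw rv P k := NBlockAux.zero_mem rw rv hP
  have hne : ∀ k, (objVals rw rv P k).Nonempty := fun k => ⟨0, hzero k⟩
  have hnn : ∀ k, 0 ≤ u k := fun k => le_csSup (hbdd k) (hzero k)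
  have hsuper : ∀ a b : ℕ, u a + u b ≤ u (a + b) := by
    intro a b
    have hstep : ∀ y ∈ objVals rw rv P a, ∀ z ∈ objVals rw rv P b, y + z ≤ u (a + b) := by
      intro y hy z hz
      obtain ⟨w0, hw0, hle⟩ := NBlockAux.exists_combine rw rv P hw hy hz
      exact hle.trans (le_csSup (hbdd _) hw0)
    have h1 : u a ≤ u (a + b) - u b := by
      apply csSup_le (hne a)
      intro y hy
      rw [le_sub_iff_add_le]
      have h2 : u b ≤ u (a + b) - y := by
        apply csSup_le (hne b)
        intro z hz
        rw [le_sub_iff_add_le, add_comm]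
        exact hstep y hy z hz
      linarith
    linarith
  refine ⟨hsuper, ?_⟩
  have hsubadd : Subadditive (fun k => -u k) := by
    intro a b
    have := hsuper a b
    simp only [neg_add]
    linarith
  obtain ⟨c, hc⟩ := hfin
  have hbddB : BddBelow (Set.range fun k : ℕ => -u k / (k : ℝ)) := by
    refine ⟨-c, ?_⟩
    rintro x ⟨k, rfl⟩
    have : u k / (k : ℝ) ≤ c := hc ⟨k, rfl⟩
    simp only [neg_div]
    linarith
  have htend := hsubadd.tendsto_lim hbddB
  set S : Set ℝ := (fun k : ℕ => u k / (k : ℝ)) '' Set.Ici 1 with hSdef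
  have hSne : S.Nonempty := ⟨u 1 / ((1:ℕ):ℝ), ⟨1, Set.mem_Ici.mpr (le_refl 1), rfl⟩⟩
  have hSbdd : BddAbove S := by
    refine ⟨c, ?_⟩
    rintro x ⟨k, _, rfl⟩
    exact hc ⟨k, rfl⟩
  have hSnn : 0 ≤ sSup S := by
    have h1 : (u 1 / (1 : ℕ) : ℝ) ∈ S := ⟨1, Set.mem_Ici.mpr (le_refl 1), rfl⟩
    have := le_csSup hSbdd h1
    have := hnn 1
    have : (0:ℝ) ≤ u 1 / ((1:ℕ):ℝ) := by positivity
    linarith [le_csSup hSbdd h1]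
  have hlim : hsubadd.lim = -sSup S := by
    rw [Subadditive.lim, Real.sInf_def]
    congr 1
    congr 1
    ext x
    simp only [Set.mem_neg, Set.mem_image, Set.mem_Ici, hSdef]
    constructor
    · rintro ⟨k, hk, hkx⟩
      exact ⟨k, hk, by rw [neg_div] at hkx; linarith⟩
    · rintro ⟨k, hk, hkx⟩
      exact ⟨k, hk, by rw [neg_div]; linarith⟩
  have hsup : (⨆ k : ℕ, u k / (k : ℝ)) = sSup S := by
    rw [iSup]
    have hrange : Set.range (fun k : ℕ => u k / (k : ℝ)) = insert (0 : ℝ) S := by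
      ext x
      simp only [Set.mem_range, Set.mem_insert_iff, hSdef, Set.mem_image, Set.mem_Ici]
      constructor
      · rintro ⟨k, rfl⟩
        rcases Nat.eq_zero_or_pos k with hk | hk
        · subst hk
          left
          simp
        · right
          exact ⟨k, hk, rfl⟩
      · rintro (rfl | ⟨k, hk, rfl⟩)
        · exact ⟨0, by simp⟩
        · exact ⟨k, rfl⟩
    rw [hrange, csSup_insert hSbdd hSne]
    exact sup_eq_right.mpr hSnn
  have htend' : Tendsto (fun k : ℕ => u k / (k : ℝ)) atTop (nhds (-hsubadd.lim)) := by
    have := htend.neg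
    simp only [neg_div, neg_neg] at this
    convert this using 1
  rw [hlim, neg_neg] at htend'
  rw [show (⨆ n : ℕ, sSup (objVals rw rv P n) / (n : ℝ)) = sSup S from hsup]
  exact htend'
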